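/- Let ε > 0, L > 0, λ > 0, and let ψ₁ and ψ₂ be two linear bound states for the same parameters ε, L, λ, neither identically zero. Then ψ₁ and ψ₂ are proportional: there exists a real constant c ≠ 0 with ψ₂(x) = c·ψ₁(x) for all x. In other words, for fixed parameters the space of linear bound states is at most one-dimensional. -/

import Mathlib

open Filter Topology Set

/-- A linear bound state for the double delta-well problem with parameters
`ε, L, lam`: `ψ` is continuous, decays at `±∞`, has derivative `ψ'` and satisfies
`ψ'' = lam² ψ` away from `±L`, and the one-sided limits of `ψ'` at `±L` exist and
jump by `-ε ψ`. -/
def IsLinearBoundState (ε L lam : ℝ) (ψ ψ' : ℝ → ℝ) : Prop :=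
  Continuous ψ ∧
  Tendsto ψ atTop (𝓝 0) ∧ Tendsto ψ atBot (𝓝 0) ∧
  (∀ x : ℝ, x ≠ L → x ≠ -L →
    HasDerivAt ψ (ψ' x) x ∧ HasDerivAt ψ' (lam ^ 2 * ψ x) x) ∧
  (∀ x : ℝ, x = L ∨ x = -L →
    ∃ a b : ℝ,
      Tendsto ψ' (𝓝[>] x) (𝓝 a) ∧
      Tendsto ψ' (𝓝[<] x) (𝓝 b) ∧
      a - b = -ε * ψ x)

private lemma constOn {s : Set ℝ} (hso : IsOpen s) (hs : Convex ℝ s) {f : ℝ → ℝ}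
    (hf : ∀ x ∈ s, HasDerivAt f 0 x) {x y : ℝ} (hx : x ∈ s) (hy : y ∈ s) : f x = f y := by
  refine hs.is_const_of_fderivWithin_eq_zero
    (fun z hz => (hf z hz).differentiableAt.differentiableWithinAt) (fun z hz => ?_) hx hy
  rw [fderivWithin_of_isOpen hso hz, (hf z hz).hasFDerivAt.fderiv]
  ext
  simp

private lemma const_eq_of_tendsto {s : Set ℝ} (hso : IsOpen s) (hs : Convex ℝ s)
    {f : ℝ → ℝ} (hf : ∀ x ∈ s, HasDerivAt f 0 x)
    {l : Filter ℝ} [l.NeBot] (hsl : s ∈ l) {A : ℝ} (hlim : Tendsto f l (𝓝 A)) :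
    ∀ x ∈ s, f x = A := by
  intro x hx
  have hev : (fun _ : ℝ => f x) =ᶠ[l] f :=
    eventually_of_mem hsl fun y hy => (constOn hso hs hf hy hx).symm
  exact tendsto_nhds_unique_of_eventuallyEq tendsto_const_nhds hlim hev

private lemma comb_deriv {lam : ℝ} {ψ ψ' : ℝ → ℝ} (s : ℝ) (hs : s ^ 2 = lam ^ 2) {x : ℝ}
    (h1 : HasDerivAt ψ (ψ' x) x) (h2 : HasDerivAt ψ' (lam ^ 2 * ψ x) x) :
    HasDerivAt (fun y => (ψ' y + s * ψ y) * Real.exp (-(s * y))) 0 x := by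
  have h0 : HasDerivAt (fun y : ℝ => -(s * y)) (-s) x := by
    simpa using ((hasDerivAt_id x).const_mul s).fun_neg
  have he : HasDerivAt (fun y : ℝ => Real.exp (-(s * y))) (-s * Real.exp (-(s * x))) x := by
    simpa [mul_comm] using h0.exp
  have h3 : HasDerivAt (fun y => ψ' y + s * ψ y) (lam ^ 2 * ψ x + s * ψ' x) x :=
    h2.add (h1.const_mul s)
  have h4 := h3.mul he
  refine h4.congr_deriv (Eq.symm ?_)
  linear_combination (ψ x * Real.exp (-(s * x))) * hs

private lemma comb2 {ψ ψ' : ℝ → ℝ} (s : ℝ) {x : ℝ} (h1 : HasDerivAt ψ (ψ' x) x) :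
    HasDerivAt (fun y => ψ y * Real.exp (s * y)) ((ψ' x + s * ψ x) * Real.exp (s * x)) x := by
  have he : HasDerivAt (fun y : ℝ => Real.exp (s * y)) (s * Real.exp (s * x)) x := by
    simpa [mul_comm] using (((hasDerivAt_id x).const_mul s)).exp
  have := h1.mul he
  refine this.congr_deriv ?_
  ring

private lemma tendsto_comb {ψ ψ' : ℝ → ℝ} (hC : Continuous ψ) (s c : ℝ) {l : Filter ℝ}
    (hl : l ≤ 𝓝 c) {b : ℝ} (hb : Tendsto ψ' l (𝓝 b)) :
    Tendsto (fun y => (ψ' y + s * ψ y) * Real.exp (-(s * y))) l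
      (𝓝 ((b + s * ψ c) * Real.exp (-(s * c)))) := by
  have hce : Continuous fun y : ℝ => Real.exp (-(s * y)) :=
    Real.continuous_exp.comp (continuous_const.mul continuous_id).neg
  exact (hb.add (((hC.tendsto c).mono_left hl).const_mul s)).mul ((hce.tendsto c).mono_left hl)

private lemma vanish (ε L lam : ℝ) (hL : 0 < L) (hlam : 0 < lam)
    (ψ ψ' : ℝ → ℝ) (h : IsLinearBoundState ε L lam ψ ψ') (h0 : ψ L = 0) :
    ∀ x, ψ x = 0 := by
  obtain ⟨hC, hT, -, hODE, hJ⟩ := h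
  have hLL : -L < L := by linarith
  have hIoi : ∀ x ∈ Ioi L, HasDerivAt ψ (ψ' x) x ∧ HasDerivAt ψ' (lam ^ 2 * ψ x) x :=
    fun x hx => hODE x (ne_of_gt hx) (lt_trans hLL hx).ne'
  have hIoo : ∀ x ∈ Ioo (-L) L, HasDerivAt ψ (ψ' x) x ∧ HasDerivAt ψ' (lam ^ 2 * ψ x) x :=
    fun x hx => hODE x hx.2.ne hx.1.ne'
  have hIio : ∀ x ∈ Iio (-L), HasDerivAt ψ (ψ' x) x ∧ HasDerivAt ψ' (lam ^ 2 * ψ x) x :=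
    fun x hx => hODE x (lt_trans hx hLL).ne hx.ne
  -- the two integrating-factor combinations
  set u : ℝ → ℝ := fun y => (ψ' y + lam * ψ y) * Real.exp (-(lam * y)) with hu_def
  set w : ℝ → ℝ := fun y => (ψ' y + (-lam) * ψ y) * Real.exp (-((-lam) * y)) with hw_def
  have hu : ∀ x ∈ Ioi L, HasDerivAt u 0 x :=
    fun x hx => comb_deriv lam rfl (hIoi x hx).1 (hIoi x hx).2
  have hw : ∀ x ∈ Ioi L, HasDerivAt w 0 x :=
    fun x hx => comb_deriv (-lam) (by ring) (hIoi x hx).1 (hIoi x hx).2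
  have hL1 : L + 1 ∈ Ioi L := by simp
  set Cu := u (L + 1) with hCu_def
  set Cw := w (L + 1) with hCw_def
  have huc : ∀ x ∈ Ioi L, u x = Cu :=
    fun x hx => constOn isOpen_Ioi (convex_Ioi L) hu hx hL1
  have hwc : ∀ x ∈ Ioi L, w x = Cw :=
    fun x hx => constOn isOpen_Ioi (convex_Ioi L) hw hx hL1
  -- Cu = 0 from decay at +∞
  have he0 : Tendsto (fun x : ℝ => Real.exp (-(lam * x))) atTop (𝓝 0) := by
    apply Real.tendsto_exp_atBot.comp
    exact tendsto_neg_atBot_iff.mpr (Tendsto.const_mul_atTop hlam tendsto_id)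
  have hCu0 : Cu = 0 := by
    have hev : (fun _ : ℝ => Cu) =ᶠ[atTop]
        fun x => (2 * lam * ψ x + Cw * Real.exp (-(lam * x))) * Real.exp (-(lam * x)) := by
      filter_upwards [eventually_gt_atTop L] with x hx
      have h1 := huc x hx
      have h2 := hwc x hx
      simp only [hu_def, hw_def] at h1 h2
      have hee : Real.exp (-(-lam * x)) * Real.exp (-(lam * x)) = 1 := by
        rw [← Real.exp_add]; ring_nf; exact Real.exp_zero
      linear_combination (-1) * h1 + Real.exp (-(lam * x)) ^ 2 * h2 -
        ((ψ' x - lam * ψ x) * Real.exp (-(lam * x))) * hee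
    have hlim : Tendsto
        (fun x => (2 * lam * ψ x + Cw * Real.exp (-(lam * x))) * Real.exp (-(lam * x)))
        atTop (𝓝 0) := by
      have := ((hT.const_mul (2 * lam)).add (he0.const_mul Cw)).mul he0
      simpa using this
    exact tendsto_nhds_unique_of_eventuallyEq tendsto_const_nhds hlim hev
  have hpsi'Ioi : ∀ x ∈ Ioi L, ψ' x = -lam * ψ x := by
    intro x hx
    have h1 := huc x hx
    rw [hCu0] at h1
    have := mul_eq_zero.mp h1
    rcases this with h | h
    · linarith
    · exact absurd h (Real.exp_ne_zero _)
  -- ψ = 0 on Ioi L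
  set v : ℝ → ℝ := fun y => ψ y * Real.exp (lam * y) with hv_def
  have hvC : Continuous v := hC.mul (Real.continuous_exp.comp (continuous_const.mul continuous_id))
  have hv : ∀ x ∈ Ioi L, HasDerivAt v 0 x := by
    intro x hx
    have h5 := comb2 lam (hIoi x hx).1
    rw [show ψ' x + lam * ψ x = 0 from by rw [hpsi'Ioi x hx]; ring, zero_mul] at h5
    exact h5
  have hvlim : Tendsto v (𝓝[>] L) (𝓝 0) := by
    have : Tendsto v (𝓝[>] L) (𝓝 (v L)) := (hvC.tendsto L).mono_left nhdsWithin_le_nhds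
    rwa [show v L = 0 from by simp [hv_def, h0]] at this
  have hvanIoi : ∀ x ∈ Ioi L, ψ x = 0 := by
    intro x hx
    have := const_eq_of_tendsto isOpen_Ioi (convex_Ioi L) hv self_mem_nhdsWithin hvlim x hx
    simp only [hv_def] at this
    rcases mul_eq_zero.mp this with h | h
    · exact h
    · exact absurd h (Real.exp_ne_zero _)
  -- limits of ψ' at L
  obtain ⟨a, b, ha, hb, hab⟩ := hJ L (Or.inl rfl)
  have ha0 : a = 0 := by
    have hev : ψ' =ᶠ[𝓝[>] L] fun x => -lam * ψ x :=
      eventually_of_mem self_mem_nhdsWithin fun x hx => hpsi'Ioi x hx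
    have hlim2 : Tendsto (fun x => -lam * ψ x) (𝓝[>] L) (𝓝 0) := by
      have : Tendsto (fun x => -lam * ψ x) (𝓝[>] L) (𝓝 (-lam * ψ L)) :=
        ((hC.tendsto L).mono_left nhdsWithin_le_nhds).const_mul (-lam)
      simpa [h0] using this
    exact tendsto_nhds_unique_of_eventuallyEq ha hlim2 hev
  have hb0 : b = 0 := by
    rw [h0] at hab; rw [ha0] at hab; linarith
  -- middle interval
  have hum : ∀ x ∈ Ioo (-L) L, HasDerivAt u 0 x :=
    fun x hx => comb_deriv lam rfl (hIoo x hx).1 (hIoo x hx).2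
  have hmm : Ioo (-L) L ∈ 𝓝[<] L := Ioo_mem_nhdsLT_of_mem ⟨hLL, le_refl L⟩
  have hulim : Tendsto u (𝓝[<] L) (𝓝 0) := by
    have := tendsto_comb hC lam L (nhdsWithin_le_nhds (s := Iio L)) hb
    rwa [show (b + lam * ψ L) * Real.exp (-(lam * L)) = 0 from by rw [hb0, h0]; ring] at this
  have hpsi'Ioo : ∀ x ∈ Ioo (-L) L, ψ' x = -lam * ψ x := by
    intro x hx
    have h1 := const_eq_of_tendsto isOpen_Ioo (convex_Ioo (-L) L) hum hmm hulim x hx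
    simp only [hu_def] at h1
    rcases mul_eq_zero.mp h1 with h | h
    · linarith
    · exact absurd h (Real.exp_ne_zero _)
  have hvm : ∀ x ∈ Ioo (-L) L, HasDerivAt v 0 x := by
    intro x hx
    have h5 := comb2 lam (hIoo x hx).1
    rw [show ψ' x + lam * ψ x = 0 from by rw [hpsi'Ioo x hx]; ring, zero_mul] at h5
    exact h5
  have hvlim2 : Tendsto v (𝓝[<] L) (𝓝 0) := by
    have : Tendsto v (𝓝[<] L) (𝓝 (v L)) := (hvC.tendsto L).mono_left nhdsWithin_le_nhds
    rwa [show v L = 0 from by simp [hv_def, h0]] at this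
  have hvanIoo : ∀ x ∈ Ioo (-L) L, ψ x = 0 := by
    intro x hx
    have := const_eq_of_tendsto isOpen_Ioo (convex_Ioo (-L) L) hvm hmm hvlim2 x hx
    simp only [hv_def] at this
    rcases mul_eq_zero.mp this with h | h
    · exact h
    · exact absurd h (Real.exp_ne_zero _)
  -- ψ (-L) = 0
  have hmm2 : Ioo (-L) L ∈ 𝓝[>] (-L) := Ioo_mem_nhdsGT_of_mem ⟨le_refl (-L), hLL⟩
  have h0' : ψ (-L) = 0 := by
    have hev : ψ =ᶠ[𝓝[>] (-L)] fun _ => 0 :=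
      eventually_of_mem hmm2 fun x hx => hvanIoo x hx
    exact tendsto_nhds_unique_of_eventuallyEq
      ((hC.tendsto (-L)).mono_left nhdsWithin_le_nhds) tendsto_const_nhds hev
  -- limits of ψ' at -L
  obtain ⟨a', b', ha', hb', hab'⟩ := hJ (-L) (Or.inr rfl)
  have ha'0 : a' = 0 := by
    have hev : ψ' =ᶠ[𝓝[>] (-L)] fun x => -lam * ψ x :=
      eventually_of_mem hmm2 fun x hx => hpsi'Ioo x hx
    have hlim2 : Tendsto (fun x => -lam * ψ x) (𝓝[>] (-L)) (𝓝 0) := by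
      have : Tendsto (fun x => -lam * ψ x) (𝓝[>] (-L)) (𝓝 (-lam * ψ (-L))) :=
        ((hC.tendsto (-L)).mono_left nhdsWithin_le_nhds).const_mul (-lam)
      simpa [h0'] using this
    exact tendsto_nhds_unique_of_eventuallyEq ha' hlim2 hev
  have hb'0 : b' = 0 := by
    rw [h0'] at hab'; rw [ha'0] at hab'; linarith
  -- left ray
  have hwl : ∀ x ∈ Iio (-L), HasDerivAt w 0 x :=
    fun x hx => comb_deriv (-lam) (by ring) (hIio x hx).1 (hIio x hx).2
  have hwlim : Tendsto w (𝓝[<] (-L)) (𝓝 0) := by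
    have := tendsto_comb hC (-lam) (-L) (nhdsWithin_le_nhds (s := Iio (-L))) hb'
    rwa [show (b' + -lam * ψ (-L)) * Real.exp (-(-lam * -L)) = 0 from by
      rw [hb'0, h0']; ring] at this
  have hIiomem : Iio (-L) ∈ 𝓝[<] (-L) := self_mem_nhdsWithin
  have hpsi'Iio : ∀ x ∈ Iio (-L), ψ' x = lam * ψ x := by
    intro x hx
    have h1 := const_eq_of_tendsto isOpen_Iio (convex_Iio (-L)) hwl hIiomem hwlim x hx
    simp only [hw_def] at h1
    rcases mul_eq_zero.mp h1 with h | h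
    · linarith
    · exact absurd h (Real.exp_ne_zero _)
  set v2 : ℝ → ℝ := fun y => ψ y * Real.exp (-lam * y) with hv2_def
  have hv2C : Continuous v2 :=
    hC.mul (Real.continuous_exp.comp (continuous_const.mul continuous_id))
  have hv2 : ∀ x ∈ Iio (-L), HasDerivAt v2 0 x := by
    intro x hx
    have h5 := comb2 (-lam) (hIio x hx).1
    rw [show ψ' x + -lam * ψ x = 0 from by rw [hpsi'Iio x hx]; ring, zero_mul] at h5
    exact h5
  have hv2lim : Tendsto v2 (𝓝[<] (-L)) (𝓝 0) := by
    have : Tendsto v2 (𝓝[<] (-L)) (𝓝 (v2 (-L))) := (hv2C.tendsto (-L)).mono_left nhdsWithin_le_nhds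
    rwa [show v2 (-L) = 0 from by simp [hv2_def, h0']] at this
  have hvanIio : ∀ x ∈ Iio (-L), ψ x = 0 := by
    intro x hx
    have := const_eq_of_tendsto isOpen_Iio (convex_Iio (-L)) hv2 hIiomem hv2lim x hx
    simp only [hv2_def] at this
    rcases mul_eq_zero.mp this with h | h
    · exact h
    · exact absurd h (Real.exp_ne_zero _)
  -- conclude
  intro x
  rcases lt_trichotomy x (-L) with hx | hx | hx
  · exact hvanIio x hx
  · rw [hx]; exact h0'
  · rcases lt_trichotomy x L with hx2 | hx2 | hx2
    · exact hvanIoo x ⟨hx, hx2⟩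
    · rw [hx2]; exact h0
    · exact hvanIoi x hx2

/-- two nonzero linear bound states for the same parameters are
proportional; the space of linear bound states is at most one-dimensional. -/
theorem linear_bound_state_unique_up_to_scaling (ε L lam : ℝ)
    (hε : 0 < ε) (hL : 0 < L) (hlam : 0 < lam)
    (ψ₁ ψ₁' ψ₂ ψ₂' : ℝ → ℝ)
    (h₁ : IsLinearBoundState ε L lam ψ₁ ψ₁') (hne₁ : ψ₁ ≠ 0)
    (h₂ : IsLinearBoundState ε L lam ψ₂ ψ₂') (hne₂ : ψ₂ ≠ 0) :
    ∃ c : ℝ, c ≠ 0 ∧ ∀ x : ℝ, ψ₂ x = c * ψ₁ x := by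
  have hψ1L : ψ₁ L ≠ 0 := fun h0 =>
    hne₁ (funext (vanish ε L lam hL hlam ψ₁ ψ₁' h₁ h0))
  have hψ2L : ψ₂ L ≠ 0 := fun h0 =>
    hne₂ (funext (vanish ε L lam hL hlam ψ₂ ψ₂' h₂ h0))
  set c := ψ₂ L / ψ₁ L with hc_def
  have hc : c ≠ 0 := div_ne_zero hψ2L hψ1L
  refine ⟨c, hc, fun x => ?_⟩
  obtain ⟨hC1, hT1, hB1, hODE1, hJ1⟩ := h₁
  obtain ⟨hC2, hT2, hB2, hODE2, hJ2⟩ := h₂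
  have hφ : IsLinearBoundState ε L lam (fun y => ψ₂ y - c * ψ₁ y)
      (fun y => ψ₂' y - c * ψ₁' y) := by
    refine ⟨hC2.sub (continuous_const.mul hC1), ?_, ?_, ?_, ?_⟩
    · simpa using hT2.sub (hT1.const_mul c)
    · simpa using hB2.sub (hB1.const_mul c)
    · intro y h1 h2
      obtain ⟨d1, d2⟩ := hODE1 y h1 h2
      obtain ⟨e1, e2⟩ := hODE2 y h1 h2
      refine ⟨e1.sub (d1.const_mul c), ?_⟩
      have := e2.sub (d2.const_mul c)
      refine this.congr_deriv ?_
      ring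
    · intro y hy
      obtain ⟨a1, b1, ha1, hb1, hab1⟩ := hJ1 y hy
      obtain ⟨a2, b2, ha2, hb2, hab2⟩ := hJ2 y hy
      exact ⟨a2 - c * a1, b2 - c * b1, ha2.sub (ha1.const_mul c),
        hb2.sub (hb1.const_mul c), by linear_combination hab2 - c * hab1⟩
  have h0 : ψ₂ L - c * ψ₁ L = 0 := by
    rw [hc_def]
    field_simp
    ring
  have := vanish ε L lam hL hlam _ _ hφ h0 x
  linarith
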